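/- Let I ⊂ ℂ[S,T] be the ideal generated by (T−1)(T²−1), (S−1)(S²−1), and (S−T)(T−1), and let A = ℂ[S,T]/I. Then the ideal m of A generated by S−1 and T−1 is maximal, and the localization A_m is isomorphic as a ℂ-algebra to ℂ[u,v]/⟨u,v⟩². In particular A_m is a 3-dimensional local ℂ-algebra whose maximal ideal squares to zero. -/

import Mathlib

set_option synthInstance.maxHeartbeats 1000000
set_option maxHeartbeats 1000000

/-!
STATEMENT 17: Let `A = ℂ[S,T]/⟨(T-1)(T²-1), (S-1)(S²-1), (S-T)(T-1)⟩`.  The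
ideal `m = ⟨S-1, T-1⟩` of `A` is maximal, and the localization `A_m` is
isomorphic as a ℂ-algebra to `ℂ[u,v]/⟨u,v⟩²`.  In particular `A_m` is a
3-dimensional local ℂ-algebra whose maximal ideal squares to zero.
-/

open MvPolynomial

/-- The defining ideal of the virtual K-theory of `ℙ(1,2)` over `ℂ`:
`⟨(T-1)(T²-1), (S-1)(S²-1), (S-T)(T-1)⟩ ⊆ ℂ[S,T]`, with `S = X 0`, `T = X 1`. -/
noncomputable def virtIdeal2C : Ideal (MvPolynomial (Fin 2) ℂ) :=
  Ideal.span
    {(X 1 - 1) * ((X 1) ^ 2 - 1),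
     (X 0 - 1) * ((X 0) ^ 2 - 1),
     (X 0 - X 1) * (X 1 - 1)}

/-- `A = ℂ[S,T]/⟨(T-1)(T²-1), (S-1)(S²-1), (S-T)(T-1)⟩`. -/
abbrev VirtK2C : Type := MvPolynomial (Fin 2) ℂ ⧸ virtIdeal2C

/-- The augmentation ideal `m = ⟨S - 1, T - 1⟩` of `A`. -/
noncomputable def augIdeal2 : Ideal VirtK2C :=
  Ideal.span
    {Ideal.Quotient.mk virtIdeal2C (X 0) - 1,
     Ideal.Quotient.mk virtIdeal2C (X 1) - 1}

/-- `ℂ[u,v]/⟨u,v⟩²`, the K-theory of the crepant resolution `Z₂`. -/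
abbrev SquareZeroTwoVars : Type :=
  MvPolynomial (Fin 2) ℂ ⧸ ((Ideal.span {(X 0 : MvPolynomial (Fin 2) ℂ), X 1}) ^ 2)

set_option linter.unreachableTactic false
set_option linter.unnecessarySeqFocus false
set_option linter.unusedTactic false

noncomputable section HKRCaux

abbrev Rp := MvPolynomial (Fin 2) ℂ
abbrev Jid : Ideal Rp := Ideal.span {X 0, X 1}
def alf : Rp →ₐ[ℂ] Rp := aeval ![X 0 + 1, X 1 + 1]
def bet : Rp →ₐ[ℂ] Rp := aeval ![X 0 - 1, X 1 - 1]

lemma bet_alf (p : Rp) : bet (alf p) = p := by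
  have : bet.comp alf = AlgHom.id ℂ Rp := by
    apply MvPolynomial.algHom_ext
    intro i; fin_cases i <;> simp [alf, bet]
  calc bet (alf p) = (bet.comp alf) p := rfl
    _ = p := by rw [this]; rfl

lemma alf_bet (p : Rp) : alf (bet p) = p := by
  have : alf.comp bet = AlgHom.id ℂ Rp := by
    apply MvPolynomial.algHom_ext
    intro i; fin_cases i <;> simp [alf, bet]
  calc alf (bet p) = (alf.comp bet) p := rfl
    _ = p := by rw [this]; rfl


lemma X0_mem : (X 0 : Rp) ∈ Jid := Ideal.subset_span (by simp)
lemma X1_mem : (X 1 : Rp) ∈ Jid := Ideal.subset_span (by simp)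

-- H1' : p - C(constantCoeff p) ∈ Jid
lemma sub_const_mem (p : Rp) : p - C (constantCoeff p) ∈ Jid := by
  have himg : (MvPolynomial.X '' (Set.univ : Set (Fin 2)) : Set Rp) = {X 0, X 1} := by
    ext q
    constructor
    · rintro ⟨i, -, rfl⟩; fin_cases i <;> simp
    · rintro (rfl | rfl)
      · exact ⟨0, trivial, rfl⟩
      · exact ⟨1, trivial, rfl⟩
  rw [Jid, ← himg, mem_ideal_span_X_image]
  intro m hm
  rcases eq_or_ne m 0 with rfl | h
  · exfalso
    simp [mem_support_iff, coeff_sub, coeff_C, constantCoeff_eq] at hm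
  · obtain ⟨i, hi⟩ := Finsupp.ne_iff.mp h
    exact ⟨i, trivial, by simpa using hi⟩

lemma ev0_eq_constantCoeff (p : Rp) : aeval (fun _ => (0:ℂ)) p = constantCoeff p := by
  rw [aeval_zero']
  simp


def mkB : Rp →ₐ[ℂ] SquareZeroTwoVars := Ideal.Quotient.mkₐ ℂ (Jid ^ 2)
def fee : Rp →ₐ[ℂ] SquareZeroTwoVars := mkB.comp alf

lemma fee_gen : ∀ a ∈ virtIdeal2C, fee a = 0 := by
  have h1 : alf ((X 1 - 1) * ((X 1)^2 - 1)) = (X 1 * X 1) * (X 1 + 2) := by simp [alf]; ring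
  have h2 : alf ((X 0 - 1) * ((X 0)^2 - 1)) = (X 0 * X 0) * (X 0 + 2) := by simp [alf]; ring
  have h3 : alf ((X 0 - X 1) * (X 1 - 1)) = X 0 * X 1 - X 1 * X 1 := by simp [alf]; ring
  have hle : virtIdeal2C ≤ RingHom.ker fee.toRingHom := by
    rw [virtIdeal2C, Ideal.span_le]
    rintro q (rfl | rfl | rfl) <;>
      · show fee _ = 0
        rw [fee]
        simp only [AlgHom.comp_apply, h1, h2, h3]
        rw [mkB, Ideal.Quotient.mkₐ_eq_mk, Ideal.Quotient.eq_zero_iff_mem, pow_two]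
        first
        | exact Ideal.mul_mem_right _ _ (Ideal.mul_mem_mul X1_mem X1_mem)
        | exact Ideal.mul_mem_right _ _ (Ideal.mul_mem_mul X0_mem X0_mem)
        | exact sub_mem (Ideal.mul_mem_mul X0_mem X1_mem) (Ideal.mul_mem_mul X1_mem X1_mem)
  exact fun a ha => hle ha

def psi : VirtK2C →ₐ[ℂ] SquareZeroTwoVars := Ideal.Quotient.liftₐ virtIdeal2C fee fee_gen

lemma psi_mk (p : Rp) : psi (Ideal.Quotient.mk virtIdeal2C p) = Ideal.Quotient.mk (Jid^2) (alf p) :=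
  Ideal.Quotient.liftₐ_apply _ _ _ _

def ev1 : Rp →ₐ[ℂ] ℂ := aeval (fun _ => 1)
def ev0 : Rp →ₐ[ℂ] ℂ := aeval (fun _ => 0)

lemma ev0_alf (p : Rp) : ev0 (alf p) = ev1 p := by
  have : ev0.comp alf = ev1 := by
    apply MvPolynomial.algHom_ext
    intro i; fin_cases i <;> simp [alf, ev0, ev1]
  calc ev0 (alf p) = (ev0.comp alf) p := rfl
    _ = ev1 p := by rw [this]

lemma eps_gen : ∀ a ∈ virtIdeal2C, ev1 a = 0 := by
  have hle : virtIdeal2C ≤ RingHom.ker ev1.toRingHom := by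
    rw [virtIdeal2C, Ideal.span_le]
    rintro q (rfl | rfl | rfl) <;>
      · show ev1 _ = 0
        simp [ev1]
  exact fun a ha => hle ha

def eps : VirtK2C →ₐ[ℂ] ℂ := Ideal.Quotient.liftₐ virtIdeal2C ev1 eps_gen

lemma eps_mk (p : Rp) : eps (Ideal.Quotient.mk virtIdeal2C p) = ev1 p :=
  Ideal.Quotient.liftₐ_apply _ _ _ _

lemma unit_of_ev0_ne (q : Rp) (h : ev0 q ≠ 0) : IsUnit (Ideal.Quotient.mk (Jid^2) q) := by
  set c := ev0 q with hc
  have hcc : ev0 q = constantCoeff q := by rw [ev0]; exact ev0_eq_constantCoeff q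
  have hmem : q - C c ∈ Jid := by rw [hc, hcc]; exact sub_const_mem q
  have hnil : IsNilpotent (Ideal.Quotient.mk (Jid^2) (q - C c)) := by
    refine ⟨2, ?_⟩
    rw [← map_pow, Ideal.Quotient.eq_zero_iff_mem]
    exact Ideal.pow_mem_pow hmem 2
  have hu : IsUnit (Ideal.Quotient.mk (Jid^2) (C c)) := by
    have : (Ideal.Quotient.mk (Jid^2) (C c)) = algebraMap ℂ _ c := rfl
    rw [this]
    exact (Ne.isUnit h).map (algebraMap ℂ (SquareZeroTwoVars))
  have := hnil.isUnit_add_right_of_commute hu (Commute.all _ _)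
  simpa using this

lemma nonunit_form (b : SquareZeroTwoVars) (h : ¬ IsUnit b) :
    ∃ q ∈ Jid, Ideal.Quotient.mk (Jid^2) q = b := by
  obtain ⟨p, rfl⟩ := Ideal.Quotient.mk_surjective b
  have hc : ev0 p = 0 := by
    by_contra hne
    exact h (unit_of_ev0_ne p hne)
  refine ⟨p, ?_, rfl⟩
  have hcc : ev0 p = constantCoeff p := by rw [ev0]; exact ev0_eq_constantCoeff p
  have := sub_const_mem p
  rw [← hcc, hc] at this
  simpa using this


lemma mem_span_shift (p : Rp) (h : ev1 p = 0) : p ∈ Ideal.span {(X 0 : Rp) - 1, X 1 - 1} := by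
  have h0 : ev0 (alf p) = 0 := by rw [ev0_alf]; exact h
  have hcc : constantCoeff (alf p) = 0 := by rw [← ev0_eq_constantCoeff]; exact h0
  have hmem : alf p ∈ Jid := by
    have := sub_const_mem (alf p)
    rw [hcc] at this; simpa using this
  obtain ⟨f, g, hfg⟩ := Ideal.mem_span_pair.mp hmem
  rw [Ideal.mem_span_pair]
  refine ⟨bet f, bet g, ?_⟩
  have := congrArg bet hfg
  rw [map_add, map_mul, map_mul, bet_alf] at this
  have hb0 : bet (X 0) = X 0 - 1 := by simp [bet]
  have hb1 : bet (X 1) = X 1 - 1 := by simp [bet]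
  rw [hb0, hb1] at this
  exact this

lemma ker_eps : RingHom.ker eps.toRingHom = augIdeal2 := by
  ext x
  constructor
  · intro hx
    obtain ⟨p, rfl⟩ := Ideal.Quotient.mk_surjective x
    have h1 : ev1 p = 0 := by rw [← eps_mk]; exact hx
    have := mem_span_shift p h1
    obtain ⟨f, g, hfg⟩ := Ideal.mem_span_pair.mp this
    rw [augIdeal2, Ideal.mem_span_pair]
    refine ⟨Ideal.Quotient.mk _ f, Ideal.Quotient.mk _ g, ?_⟩
    rw [← hfg]
    push_cast [map_add, map_mul, map_sub, map_one]
    ring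
  · intro hx
    rw [augIdeal2] at hx
    obtain ⟨f, g, hfg⟩ := Ideal.mem_span_pair.mp hx
    rw [← hfg]
    show eps _ = 0
    rw [map_add, map_mul, map_mul, map_sub, map_sub, map_one]
    have e0 : eps (Ideal.Quotient.mk virtIdeal2C (X 0)) = 1 := by rw [eps_mk]; simp [ev1]
    have e1 : eps (Ideal.Quotient.mk virtIdeal2C (X 1)) = 1 := by rw [eps_mk]; simp [ev1]
    rw [e0, e1]; ring

lemma eps_surj : Function.Surjective eps.toRingHom := fun c =>
  ⟨algebraMap ℂ _ c, by simp⟩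

lemma aug_maximal : augIdeal2.IsMaximal := by
  rw [← ker_eps]
  exact RingHom.ker_isMaximal_of_surjective _ eps_surj

-- annihilator lemma
lemma annih (d : Rp) (hd : alf d ∈ Jid ^ 2) :
    ((X 0 : Rp) + 1) * (X 1 + 1) * d ∈ virtIdeal2C := by
  have key : ∀ q ∈ Jid ^ 2, ((X 0 : Rp) + 1) * (X 1 + 1) * bet q ∈ virtIdeal2C := by
    intro q hq
    rw [pow_two] at hq
    refine Submodule.mul_induction_on hq ?_ ?_
    · intro a ha b hb
      obtain ⟨f, g, hfg⟩ := Ideal.mem_span_pair.mp ha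
      obtain ⟨f', g', hfg'⟩ := Ideal.mem_span_pair.mp hb
      have hba : bet a = bet f * (X 0 - 1) + bet g * (X 1 - 1) := by
        have := congrArg bet hfg
        rw [map_add, map_mul, map_mul] at this
        rw [← this]; simp [bet]
      have hbb : bet b = bet f' * (X 0 - 1) + bet g' * (X 1 - 1) := by
        have := congrArg bet hfg'
        rw [map_add, map_mul, map_mul] at this
        rw [← this]; simp [bet]
      rw [map_mul, hba, hbb]
      set F := bet f; set G := bet g; set F' := bet f'; set G' := bet g'
      have hid : ((X 0 : Rp) + 1) * (X 1 + 1) *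
          ((F * (X 0 - 1) + G * (X 1 - 1)) * (F' * (X 0 - 1) + G' * (X 1 - 1))) =
          ((F * G' + G * F' + G * G') * (X 0 + 1)) * ((X 1 - 1) * ((X 1)^2 - 1)) +
          (F * F' * (X 1 + 1)) * ((X 0 - 1) * ((X 0)^2 - 1)) +
          ((F * G' + G * F') * (X 0 + 1) * (X 1 + 1)) * ((X 0 - X 1) * (X 1 - 1)) := by
        ring
      rw [hid]
      have m1 : ((X 1 : Rp) - 1) * ((X 1)^2 - 1) ∈ virtIdeal2C := Ideal.subset_span (by simp)
      have m2 : ((X 0 : Rp) - 1) * ((X 0)^2 - 1) ∈ virtIdeal2C := Ideal.subset_span (by simp)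
      have m3 : ((X 0 : Rp) - X 1) * (X 1 - 1) ∈ virtIdeal2C := Ideal.subset_span (by simp)
      exact add_mem (add_mem (Ideal.mul_mem_left _ _ m1) (Ideal.mul_mem_left _ _ m2))
        (Ideal.mul_mem_left _ _ m3)
    · intro x y hx hy
      rw [map_add, mul_add]
      exact add_mem hx hy
  have := key (alf d) hd
  rwa [bet_alf] at this

instance : Algebra VirtK2C SquareZeroTwoVars := psi.toRingHom.toAlgebra
lemma algmap_eq : algebraMap VirtK2C SquareZeroTwoVars = psi.toRingHom := rfl

instance : augIdeal2.IsMaximal := aug_maximal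
instance : augIdeal2.IsPrime := aug_maximal.isPrime

lemma eps_ne_zero_of_compl {y : VirtK2C} (hy : y ∈ augIdeal2.primeCompl) : eps y ≠ 0 := by
  intro h0
  exact hy (ker_eps ▸ (show y ∈ RingHom.ker eps.toRingHom from h0))

instance isLoc : IsLocalization augIdeal2.primeCompl SquareZeroTwoVars := by
  constructor
  constructor
  · rintro ⟨y, hy⟩
    obtain ⟨p, rfl⟩ := Ideal.Quotient.mk_surjective y
    rw [algmap_eq]
    show IsUnit (psi _)
    rw [psi_mk]
    refine unit_of_ev0_ne _ ?_
    rw [ev0_alf]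
    have := eps_ne_zero_of_compl hy
    rwa [eps_mk] at this
  · intro z
    obtain ⟨q, rfl⟩ := Ideal.Quotient.mk_surjective z
    refine ⟨⟨Ideal.Quotient.mk virtIdeal2C (bet q), 1⟩, ?_⟩
    rw [algmap_eq]
    show _ * psi 1 = psi _
    rw [map_one, mul_one, psi_mk, alf_bet]
  · intro x y hxy
    obtain ⟨p, rfl⟩ := Ideal.Quotient.mk_surjective x
    obtain ⟨p', rfl⟩ := Ideal.Quotient.mk_surjective y
    rw [algmap_eq] at hxy
    have hxy' : psi (Ideal.Quotient.mk virtIdeal2C p) = psi (Ideal.Quotient.mk virtIdeal2C p') := hxy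
    rw [psi_mk, psi_mk] at hxy'
    have hmem : alf (p - p') ∈ Jid ^ 2 := by
      rw [map_sub, ← Ideal.Quotient.eq_zero_iff_mem, map_sub, sub_eq_zero]
      exact hxy'
    have hc : ((X 0 : Rp) + 1) * (X 1 + 1) * (p - p') ∈ virtIdeal2C := annih _ hmem
    have hcompl : Ideal.Quotient.mk virtIdeal2C (((X 0 : Rp) + 1) * (X 1 + 1)) ∈ augIdeal2.primeCompl := by
      intro hmemaug
      have : eps (Ideal.Quotient.mk virtIdeal2C (((X 0 : Rp) + 1) * (X 1 + 1))) = 0 := by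
        rw [← ker_eps] at hmemaug; exact hmemaug
      rw [eps_mk] at this
      simp [ev1] at this
      -- closed by simp
    refine ⟨⟨_, hcompl⟩, ?_⟩
    show Ideal.Quotient.mk virtIdeal2C (((X 0 : Rp) + 1) * (X 1 + 1)) * _ =
      Ideal.Quotient.mk virtIdeal2C (((X 0 : Rp) + 1) * (X 1 + 1)) * _
    rw [← sub_eq_zero, ← mul_sub, ← map_sub, ← map_mul, Ideal.Quotient.eq_zero_iff_mem]
    exact hc


def eA : Localization.AtPrime augIdeal2 ≃ₐ[VirtK2C] SquareZeroTwoVars :=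
  IsLocalization.algEquiv augIdeal2.primeCompl _ _

def eC : Localization.AtPrime augIdeal2 ≃ₐ[ℂ] SquareZeroTwoVars :=
  { eA.toRingEquiv with
    commutes' := by
      intro r
      have h1 : algebraMap ℂ (Localization.AtPrime augIdeal2) r =
          algebraMap VirtK2C _ (algebraMap ℂ VirtK2C r) :=
        (IsScalarTower.algebraMap_apply ℂ VirtK2C _ r)
      show eA (algebraMap ℂ (Localization.AtPrime augIdeal2) r) = algebraMap ℂ _ r
      rw [h1, AlgEquiv.commutes, algmap_eq]
      show psi (algebraMap ℂ VirtK2C r) = _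
      rw [psi.commutes] }

def s1 : Fin 2 →₀ ℕ := Finsupp.single 0 2
def s2 : Fin 2 →₀ ℕ := Finsupp.single 0 1 + Finsupp.single 1 1
def s3 : Fin 2 →₀ ℕ := Finsupp.single 1 2

lemma hX00 : (X 0 : Rp) * X 0 = monomial s1 1 := by
  rw [X, monomial_mul, s1, one_mul]
  congr 1
  rw [← Finsupp.single_add]
lemma hX01 : (X 0 : Rp) * X 1 = monomial s2 1 := by
  rw [X, X, monomial_mul, s2, one_mul]
lemma hX11 : (X 1 : Rp) * X 1 = monomial s3 1 := by
  rw [X, monomial_mul, s3, one_mul]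
  congr 1
  rw [← Finsupp.single_add]

def Sset : Set (Fin 2 →₀ ℕ) := {s1, s2, s3}

lemma J2_eq_monomial_span :
    Jid ^ 2 = Ideal.span ((fun s => monomial s (1 : ℂ)) '' Sset) := by
  have himg : ((fun s => monomial s (1 : ℂ)) '' Sset : Set Rp) =
      {monomial s1 1, monomial s2 1, monomial s3 1} := by
    rw [Sset, Set.image_insert_eq, Set.image_insert_eq, Set.image_singleton]
  rw [himg]
  apply le_antisymm
  · rw [pow_two]
    rw [Ideal.mul_le]
    intro a ha b hb
    obtain ⟨f, g, hfg⟩ := Ideal.mem_span_pair.mp ha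
    obtain ⟨f', g', hfg'⟩ := Ideal.mem_span_pair.mp hb
    have : a * b = (f * f') * (X 0 * X 0) + (f * g' + g * f') * (X 0 * X 1)
        + (g * g') * (X 1 * X 1) := by rw [← hfg, ← hfg']; ring
    rw [this, hX00, hX01, hX11]
    have m1 : (monomial s1 1 : Rp) ∈ Ideal.span {monomial s1 1, monomial s2 1, monomial s3 (1:ℂ)} :=
      Ideal.subset_span (by simp)
    have m2 : (monomial s2 1 : Rp) ∈ Ideal.span {monomial s1 1, monomial s2 1, monomial s3 (1:ℂ)} :=
      Ideal.subset_span (by simp)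
    have m3 : (monomial s3 1 : Rp) ∈ Ideal.span {monomial s1 1, monomial s2 1, monomial s3 (1:ℂ)} :=
      Ideal.subset_span (by simp)
    exact add_mem (add_mem (Ideal.mul_mem_left _ _ m1) (Ideal.mul_mem_left _ _ m2))
      (Ideal.mul_mem_left _ _ m3)
  · rw [Ideal.span_le]
    rintro q (rfl | rfl | rfl) <;> rw [pow_two]
    · rw [← hX00]; exact Ideal.mul_mem_mul X0_mem X0_mem
    · rw [← hX01]; exact Ideal.mul_mem_mul X0_mem X1_mem
    · rw [← hX11]; exact Ideal.mul_mem_mul X1_mem X1_mem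

lemma mem_J2_iff (q : Rp) :
    q ∈ Jid ^ 2 ↔ ∀ m ∈ q.support, ∃ s ∈ Sset, s ≤ m := by
  rw [J2_eq_monomial_span, mem_ideal_span_monomial_image]

def e0 : Fin 2 →₀ ℕ := Finsupp.single 0 1
def e1 : Fin 2 →₀ ℕ := Finsupp.single 1 1

lemma exists_le_of_ne (m : Fin 2 →₀ ℕ) (h0 : m ≠ 0) (h1 : m ≠ e0) (h2 : m ≠ e1) :
    ∃ s ∈ Sset, s ≤ m := by
  have hdec : ∀ f : Fin 2 →₀ ℕ, (∀ i : Fin 2, f i ≤ m i) → f ≤ m := fun f hf => Finsupp.le_def.mpr hf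
  rcases Nat.lt_or_ge (m 0) 1 with ha0 | ha1
  · -- m 0 = 0
    have hm0 : m 0 = 0 := by omega
    rcases Nat.lt_or_ge (m 1) 2 with hb | hb
    · exfalso
      interval_cases hmb : (m 1)
      · exact h0 (by ext i; fin_cases i <;> simp_all)
      · exact h2 (by ext i; fin_cases i <;> simp [e1, hm0, hmb, Finsupp.single_apply] <;> omega)
    · exact ⟨s3, by simp [Sset], hdec _ (by intro i; fin_cases i <;> simp [s3, Finsupp.single_apply] <;> omega)⟩
  · rcases Nat.lt_or_ge (m 0) 2 with ha | ha
    · have hm0 : m 0 = 1 := by omega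
      rcases Nat.eq_zero_or_pos (m 1) with hb | hb
      · exact absurd (by ext i; fin_cases i <;> simp [e0, hm0, hb, Finsupp.single_apply] <;> omega) h1
      · exact ⟨s2, by simp [Sset], hdec _ (by intro i; fin_cases i <;>
          simp [s2, Finsupp.single_apply] <;> omega)⟩
    · exact ⟨s1, by simp [Sset], hdec _ (by intro i; fin_cases i <;>
        simp [s1, Finsupp.single_apply] <;> omega)⟩

lemma not_le_small : ∀ s ∈ Sset, ∀ m ∈ ({0, e0, e1} : Set (Fin 2 →₀ ℕ)), ¬ s ≤ m := by
  rintro s (rfl | rfl | rfl) m (rfl | rfl | rfl) hle <;>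
    · have h0 := Finsupp.le_def.mp hle 0
      have h1 := Finsupp.le_def.mp hle 1
      simp [s1, s2, s3, e0, e1, Finsupp.single_apply] at h0 h1

def mkB2 : Rp →+* SquareZeroTwoVars := Ideal.Quotient.mk (Jid ^ 2)

def bvec : Fin 3 → SquareZeroTwoVars := ![1, mkB2 (X 0), mkB2 (X 1)]

lemma ha0 : Finsupp.single (0:Fin 2) 1 ≠ 0 := by simp [Finsupp.single_eq_zero]
lemma ha1 : Finsupp.single (1:Fin 2) 1 ≠ 0 := by simp [Finsupp.single_eq_zero]
lemma ha01 : Finsupp.single (0:Fin 2) 1 ≠ Finsupp.single 1 1 := by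
  rw [Ne, Finsupp.single_eq_single_iff]; simp

lemma coeff_small (c0 c1 c2 : ℂ) :
    coeff 0 (C c0 + C c1 * X 0 + C c2 * X 1 : Rp) = c0 ∧
    coeff e0 (C c0 + C c1 * X 0 + C c2 * X 1 : Rp) = c1 ∧
    coeff e1 (C c0 + C c1 * X 0 + C c2 * X 1 : Rp) = c2 := by
  refine ⟨?_, ?_, ?_⟩ <;>
    simp [coeff_add, coeff_C, coeff_C_mul, coeff_X', e0, e1, ha0, ha1, ha01,
      ha0.symm, ha1.symm, ha01.symm]

lemma smul_mk (c : ℂ) (p : Rp) :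
    c • (Ideal.Quotient.mk (Jid^2) p) = Ideal.Quotient.mk (Jid^2) (C c * p) := by
  rw [Algebra.smul_def]
  rw [show (algebraMap ℂ (Rp ⧸ Jid ^ 2)) c = Ideal.Quotient.mk (Jid^2) (C c) from rfl,
    ← map_mul]

lemma bvec_li : LinearIndependent ℂ bvec := by
  rw [Fintype.linearIndependent_iff]
  intro g hg
  have b0 : bvec 0 = Ideal.Quotient.mk (Jid^2) 1 := by simp [bvec, mkB2]
  have b1 : bvec 1 = Ideal.Quotient.mk (Jid^2) (X 0) := rfl
  have b2 : bvec 2 = Ideal.Quotient.mk (Jid^2) (X 1) := rfl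
  have hmk : (∑ i, g i • bvec i) =
      mkB2 (C (g 0) + C (g 1) * X 0 + C (g 2) * X 1) := by
    rw [Fin.sum_univ_three, b0, b1, b2, smul_mk, smul_mk, smul_mk, mkB2]
    rw [← map_add, ← map_add]
    congr 1
    ring
  rw [hmk] at hg
  have hmem : (C (g 0) + C (g 1) * X 0 + C (g 2) * X 1 : Rp) ∈ Jid ^ 2 := by
    rwa [← Ideal.Quotient.eq_zero_iff_mem]
  rw [mem_J2_iff] at hmem
  obtain ⟨h0, h1, h2⟩ := coeff_small (g 0) (g 1) (g 2)
  have key : ∀ m ∈ ({0, e0, e1} : Set (Fin 2 →₀ ℕ)),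
      coeff m (C (g 0) + C (g 1) * X 0 + C (g 2) * X 1 : Rp) = 0 := by
    intro m hm
    by_contra hne
    obtain ⟨s, hs, hsle⟩ := hmem m (mem_support_iff.mpr hne)
    exact not_le_small s hs m hm hsle
  have k0 : g 0 = 0 := by rw [← h0]; exact key 0 (by simp)
  have k1 : g 1 = 0 := by rw [← h1]; exact key e0 (by simp)
  have k2 : g 2 = 0 := by rw [← h2]; exact key e1 (by simp)
  intro i
  fin_cases i
  · exact k0
  · exact k1
  · exact k2

lemma bvec_span : ⊤ ≤ Submodule.span ℂ (Set.range bvec) := by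
  intro b _
  obtain ⟨q, rfl⟩ := Ideal.Quotient.mk_surjective b
  set c0 := coeff 0 q
  set c1 := coeff e0 q
  set c2 := coeff e1 q
  have hr : q - (C c0 + C c1 * X 0 + C c2 * X 1) ∈ Jid ^ 2 := by
    rw [mem_J2_iff]
    intro m hm
    have hcm : coeff m (q - (C c0 + C c1 * X 0 + C c2 * X 1)) ≠ 0 := mem_support_iff.mp hm
    obtain ⟨h0, h1, h2⟩ := coeff_small c0 c1 c2
    refine exists_le_of_ne m ?_ ?_ ?_ <;> rintro rfl <;> rw [coeff_sub] at hcm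
    · rw [h0] at hcm; simp [c0] at hcm
    · rw [h1] at hcm; simp [c1] at hcm
    · rw [h2] at hcm; simp [c2] at hcm
  have heq : Ideal.Quotient.mk (Jid^2) q = mkB2 (C c0 + C c1 * X 0 + C c2 * X 1) := by
    rw [mkB2, ← sub_eq_zero, ← map_sub, Ideal.Quotient.eq_zero_iff_mem]
    exact hr
  rw [heq]
  have : mkB2 (C c0 + C c1 * X 0 + C c2 * X 1) = c0 • bvec 0 + c1 • bvec 1 + c2 • bvec 2 := by
    have b0 : bvec 0 = Ideal.Quotient.mk (Jid^2) 1 := by simp [bvec, mkB2]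
    have b1 : bvec 1 = Ideal.Quotient.mk (Jid^2) (X 0) := rfl
    have b2 : bvec 2 = Ideal.Quotient.mk (Jid^2) (X 1) := rfl
    rw [b0, b1, b2, smul_mk, smul_mk, smul_mk, mkB2, ← map_add, ← map_add]
    congr 1
    ring
  rw [this]
  exact add_mem (add_mem (Submodule.smul_mem _ _ (Submodule.subset_span ⟨0, rfl⟩))
    (Submodule.smul_mem _ _ (Submodule.subset_span ⟨1, rfl⟩)))
    (Submodule.smul_mem _ _ (Submodule.subset_span ⟨2, rfl⟩))

def bB : Module.Basis (Fin 3) ℂ SquareZeroTwoVars := Module.Basis.mk bvec_li bvec_span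

lemma finrank_B : Module.finrank ℂ SquareZeroTwoVars = 3 := by
  rw [Module.finrank_eq_card_basis bB, Fintype.card_fin]

lemma finrank_loc : Module.finrank ℂ (Localization.AtPrime augIdeal2) = 3 := by
  rw [eC.toLinearEquiv.finrank_eq, finrank_B]

lemma maxIdeal_sq :
    IsLocalRing.maximalIdeal (Localization.AtPrime augIdeal2) ^ 2 = ⊥ := by
  rw [pow_two]
  rw [← le_bot_iff, Ideal.mul_le]
  intro r hr s hs
  rw [IsLocalRing.mem_maximalIdeal, mem_nonunits_iff] at hr hs
  have hru : ¬ IsUnit (eC r) := fun h => hr (by simpa using h.map eC.symm.toAlgHom)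
  have hsu : ¬ IsUnit (eC s) := fun h => hs (by simpa using h.map eC.symm.toAlgHom)
  obtain ⟨q, hq, hqe⟩ := nonunit_form _ hru
  obtain ⟨q', hq', hqe'⟩ := nonunit_form _ hsu
  have hzero : eC (r * s) = 0 := by
    rw [map_mul, ← hqe, ← hqe', ← map_mul, Ideal.Quotient.eq_zero_iff_mem, pow_two]
    exact Ideal.mul_mem_mul hq hq'
  have : r * s = 0 := by
    have := congrArg eC.symm hzero
    rwa [AlgEquiv.symm_apply_apply, map_zero] at this
  simp [this]

end HKRCaux

theorem virtual_Ktheory_P12_HKRC :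
    ∃ hm : augIdeal2.IsMaximal,
      letI := hm.isPrime
      Nonempty (Localization.AtPrime augIdeal2 ≃ₐ[ℂ] SquareZeroTwoVars) ∧
      Module.finrank ℂ (Localization.AtPrime augIdeal2) = 3 ∧
      IsLocalRing.maximalIdeal (Localization.AtPrime augIdeal2) ^ 2 = ⊥ := by
  exact ⟨aug_maximal, ⟨eC⟩, finrank_loc, maxIdeal_sq⟩
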